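/- Let G be a locally compact Hausdorff topological group and N a closed normal subgroup of G such that both N and the quotient group G/N are compactly presented. Then G is compactly presented. -/

import Mathlib

open scoped Pointwise

private lemma one_mem_W_pow {H : Type*} [Group H] {W : Set H} (h1 : (1:H) ∈ W) :
    ∀ n : ℕ, (1:H) ∈ W ^ n := by
  intro n
  induction n with
  | zero => simp [pow_zero, Set.mem_one]
  | succ k ih => rw [pow_succ]; simpa using Set.mul_mem_mul ih h1

private lemma W_symm {H : Type*} [Group H] {T : Set H} {x : H}
    (hx : x ∈ T ∪ T⁻¹ ∪ {1}) : x⁻¹ ∈ T ∪ T⁻¹ ∪ {1} := by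
  rcases hx with (h | h) | h
  · exact Or.inl (Or.inr (by simpa [Set.mem_inv] using h))
  · exact Or.inl (Or.inl (by simpa [Set.mem_inv] using h))
  · simp only [Set.mem_singleton_iff] at h; subst h; simp

private lemma W_pow_symm {H : Type*} [Group H] {T : Set H} :
    ∀ {k : ℕ} {x : H}, x ∈ (T ∪ T⁻¹ ∪ {1}) ^ k → x⁻¹ ∈ (T ∪ T⁻¹ ∪ {1}) ^ k := by
  intro k
  induction k with
  | zero => intro x hx; rw [pow_zero] at hx ⊢; simp only [Set.mem_one] at hx ⊢; simp [hx]
  | succ n ih =>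
    intro x hx
    rw [pow_succ] at hx
    obtain ⟨y, hy, w, hw, rfl⟩ := Set.mem_mul.1 hx
    rw [mul_inv_rev, pow_succ']
    exact Set.mul_mem_mul (W_symm hw) (ih hy)

private lemma W_pow_mono {H : Type*} [Group H] {T : Set H} {k l : ℕ} (hkl : k ≤ l) :
    (T ∪ T⁻¹ ∪ {1}) ^ k ⊆ (T ∪ T⁻¹ ∪ {1}) ^ l := by
  induction l with
  | zero => simpa [Nat.le_zero.mp hkl] using subset_rfl
  | succ n ih =>
    rcases Nat.le_succ_iff.mp hkl with h | h
    · refine (ih h).trans ?_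
      intro x hx
      rw [pow_succ]
      simpa using Set.mul_mem_mul hx (by simp : (1:H) ∈ T ∪ T⁻¹ ∪ {1})
    · subst h; exact subset_rfl

private lemma swallow {H : Type*} [Group H] [TopologicalSpace H] [IsTopologicalGroup H]
    [T2Space H] [LocallyCompactSpace H] {T : Set H} (hT : IsCompact T)
    (hgen : Subgroup.closure T = ⊤) {C : Set H} (hC : IsCompact C) :
    ∃ k : ℕ, C ⊆ (T ∪ T⁻¹ ∪ {1}) ^ k := by
  set W : Set H := T ∪ T⁻¹ ∪ {1} with hW
  have hWc : IsCompact W := (hT.union hT.inv).union isCompact_singleton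
  have hpow : ∀ k, IsCompact (W ^ k) := by
    intro k
    induction k with
    | zero => rw [pow_zero, ← Set.singleton_one]; exact isCompact_singleton
    | succ n ih => rw [pow_succ]; exact ih.mul hWc
  have hcover : ∀ x : H, ∃ k, x ∈ W ^ k := by
    intro x
    have hx : x ∈ Subgroup.closure T := by rw [hgen]; trivial
    refine Subgroup.closure_induction ?_ ?_ ?_ ?_ hx
    · intro t ht; exact ⟨1, by rw [pow_one]; exact Or.inl (Or.inl ht)⟩
    · exact ⟨0, by simp [pow_zero, Set.mem_one]⟩
    · rintro a b _ _ ⟨k, hk⟩ ⟨l, hl⟩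
      exact ⟨k + l, by rw [pow_add]; exact Set.mul_mem_mul hk hl⟩
    · rintro a _ ⟨k, hk⟩; exact ⟨k, W_pow_symm hk⟩
  obtain ⟨i, x, hx⟩ := nonempty_interior_of_iUnion_of_closed
    (fun k => (hpow k).isClosed) (by ext g; simpa using hcover g)
  -- cover C by translates
  have hsub : C ⊆ ⋃ c : C, ((c : H) * x⁻¹) • interior (W ^ i) := by
    intro c hc
    refine Set.mem_iUnion.2 ⟨⟨c, hc⟩, ?_⟩
    exact Set.mem_smul_set.2 ⟨x, hx, by simp [smul_eq_mul, inv_mul_cancel_right]⟩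
  obtain ⟨t, ht⟩ := hC.elim_finite_subcover _
    (fun c : C => isOpen_interior.smul ((c : H) * x⁻¹)) hsub
  classical
  set k : C → ℕ := fun c => (hcover ((c : H) * x⁻¹)).choose with hk
  refine ⟨t.sup k + i, ?_⟩
  intro c hc
  obtain ⟨c₀, hc₀t, hc₀⟩ := Set.mem_iUnion₂.1 (ht hc)
  obtain ⟨y, hy, rfl⟩ := Set.mem_smul_set.1 hc₀
  rw [pow_add]
  refine Set.mul_mem_mul ?_ (interior_subset hy)
  exact W_pow_mono (Finset.le_sup hc₀t) (hcover ((c₀ : H) * x⁻¹)).choose_spec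

private lemma exists_word_of_mem_pow {H : Type*} [Group H] {T : Set H} :
    ∀ {k : ℕ} {x : H}, x ∈ (T ∪ T⁻¹ ∪ {1}) ^ k →
      ∃ w : List (T × Bool), w.length ≤ k ∧
        FreeGroup.lift (fun t : T => (t : H)) (FreeGroup.mk w) = x := by
  intro k
  induction k with
  | zero =>
    intro x hx
    rw [pow_zero] at hx
    rw [Set.mem_one] at hx
    exact ⟨[], by simp, by rw [← FreeGroup.one_eq_mk]; simp [hx]⟩
  | succ n ih =>
    intro x hx
    rw [pow_succ] at hx
    obtain ⟨y, hy, w0, hw0, rfl⟩ := Set.mem_mul.1 hx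
    obtain ⟨l, hl, hlv⟩ := ih hy
    rcases hw0 with (h | h) | h
    · refine ⟨l ++ [(⟨w0, h⟩, true)], by simpa using hl, ?_⟩
      rw [← FreeGroup.mul_mk, map_mul, hlv]
      congr 1
      exact FreeGroup.lift_apply_of
    · refine ⟨l ++ [(⟨w0⁻¹, Set.mem_inv.1 h⟩, false)], by simpa using hl, ?_⟩
      rw [← FreeGroup.mul_mk, map_mul, hlv]
      congr 1
      rw [show FreeGroup.mk [((⟨w0⁻¹, Set.mem_inv.1 h⟩ : T), false)]
            = (FreeGroup.of (⟨w0⁻¹, Set.mem_inv.1 h⟩ : T))⁻¹ by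
          rw [show FreeGroup.of (⟨w0⁻¹, Set.mem_inv.1 h⟩ : T)
              = FreeGroup.mk [((⟨w0⁻¹, Set.mem_inv.1 h⟩ : T), true)] from rfl, FreeGroup.inv_mk]
          rfl]
      rw [map_inv, FreeGroup.lift_apply_of]
      simp
    · simp only [Set.mem_singleton_iff] at h; subst h
      exact ⟨l, le_trans hl (Nat.le_succ n), by simpa using hlv⟩

private lemma exists_bound {H : Type*} [Group H] [TopologicalSpace H] [IsTopologicalGroup H]
    [T2Space H] [LocallyCompactSpace H] {T : Set H} (hT : IsCompact T)
    (hgen : Subgroup.closure T = ⊤) {C : Set H} (hC : IsCompact C) :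
    ∃ L : ℕ, ∀ x ∈ C, ∃ w : List (T × Bool), w.length ≤ L ∧
      FreeGroup.lift (fun t : T => (t : H)) (FreeGroup.mk w) = x := by
  obtain ⟨k, hk⟩ := swallow hT hgen hC
  exact ⟨k, fun x hx => exists_word_of_mem_pow (hk hx)⟩
private lemma conj_shuffle2 {M : Type*} [Group M] (p t : M) : t * p = p * (p⁻¹ * t * p) := by
  group

private lemma nc_ind {G : Type*} [Group G] {s : Set G} {P : G → Prop}
    (base : ∀ g r : G, r ∈ s → P (g * r * g⁻¹)) (one : P 1)
    (mul : ∀ a b : G, P a → P b → P (a * b)) (inv : ∀ a : G, P a → P a⁻¹) :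
    ∀ x ∈ Subgroup.normalClosure s, P x := by
  intro x hx
  have hx' : x ∈ Subgroup.closure (Group.conjugatesOfSet s) := hx
  refine Subgroup.closure_induction ?_ one (fun a b _ _ => mul a b) (fun a _ => inv a) hx'
  intro c hc
  obtain ⟨r, hr, hconj⟩ := Group.mem_conjugatesOfSet_iff.1 hc
  obtain ⟨g, rfl⟩ := isConj_iff.1 hconj
  exact base g r hr

section FG
variable {α β γ : Type*} (θ : FreeGroup β →* FreeGroup α) (ψ : FreeGroup γ →* FreeGroup α)
  (K : Subgroup (FreeGroup α)) [K.Normal]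

local notation "q" => QuotientGroup.mk' K

private lemma conj_into
    (hletter : ∀ (a : α) (b : β),
      (∃ y', q (FreeGroup.of a * θ (FreeGroup.of b) * (FreeGroup.of a)⁻¹) = q (θ y')) ∧
      (∃ y', q ((FreeGroup.of a)⁻¹ * θ (FreeGroup.of b) * FreeGroup.of a) = q (θ y'))) :
    ∀ (g : FreeGroup α) (y : FreeGroup β), ∃ y', q (g * θ y * g⁻¹) = q (θ y') := by
  -- from single-letter y to all y, for fixed g
  have inner : ∀ g : FreeGroup α,
      (∀ b : β, ∃ y', q (g * θ (FreeGroup.of b) * g⁻¹) = q (θ y')) →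
      ∀ y : FreeGroup β, ∃ y', q (g * θ y * g⁻¹) = q (θ y') := by
    intro g hg y
    induction y using FreeGroup.induction_on with
    | C1 => exact ⟨1, by simp⟩
    | of b => exact hg b
    | inv_of b hb =>
      obtain ⟨y', hy'⟩ := hb
      have hy2 : q (g * θ (FreeGroup.of b) * g⁻¹) = q (θ y') := hy'
      refine ⟨y'⁻¹, ?_⟩
      have : (q (g * θ (FreeGroup.of b) * g⁻¹))⁻¹ = (q (θ y'))⁻¹ := by rw [hy2]
      simpa [map_mul, map_inv, mul_assoc] using this
    | mul y₁ y₂ h₁ h₂ =>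
      obtain ⟨y₁', hy₁⟩ := h₁
      obtain ⟨y₂', hy₂⟩ := h₂
      refine ⟨y₁' * y₂', ?_⟩
      have : q (g * θ y₁ * g⁻¹) * q (g * θ y₂ * g⁻¹) = q (θ y₁') * q (θ y₂') := by
        rw [hy₁, hy₂]
      simpa [map_mul, map_inv, mul_assoc] using this
  -- main induction on g, proving the property for g and g⁻¹ simultaneously
  intro g
  have main : (∀ y, ∃ y', q (g * θ y * g⁻¹) = q (θ y')) ∧
      (∀ y, ∃ y', q (g⁻¹ * θ y * g⁻¹⁻¹) = q (θ y')) := by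
    induction g using FreeGroup.induction_on with
    | C1 => constructor <;> (intro y; exact ⟨y, by simp⟩)
    | of a =>
      constructor
      · exact inner _ (fun b => (hletter a b).1)
      · refine inner _ (fun b => ?_)
        obtain ⟨y', hy'⟩ := (hletter a b).2
        exact ⟨y', by simpa using hy'⟩
    | inv_of a ha =>
      exact ⟨ha.2, by simpa using ha.1⟩
    | mul g₁ g₂ h₁ h₂ =>
      constructor
      · intro y
        obtain ⟨y₂, hy₂⟩ := h₂.1 y
        obtain ⟨y₁, hy₁⟩ := h₁.1 y₂
        refine ⟨y₁, ?_⟩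
        calc q (g₁ * g₂ * θ y * (g₁ * g₂)⁻¹)
            = q g₁ * q (g₂ * θ y * g₂⁻¹) * q g₁⁻¹ := by
              simp [map_mul, map_inv, mul_assoc]
          _ = q g₁ * q (θ y₂) * q g₁⁻¹ := by rw [hy₂]
          _ = q (g₁ * θ y₂ * g₁⁻¹) := by simp [map_mul, map_inv, mul_assoc]
          _ = q (θ y₁) := hy₁
      · intro y
        obtain ⟨y₁, hy₁⟩ := h₁.2 y
        obtain ⟨y₂, hy₂⟩ := h₂.2 y₁
        refine ⟨y₂, ?_⟩
        calc q ((g₁ * g₂)⁻¹ * θ y * (g₁ * g₂)⁻¹⁻¹)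
            = q g₂⁻¹ * q (g₁⁻¹ * θ y * g₁⁻¹⁻¹) * q g₂⁻¹⁻¹ := by
              simp [map_mul, map_inv, mul_assoc]
          _ = q g₂⁻¹ * q (θ y₁) * q g₂⁻¹⁻¹ := by rw [hy₁]
          _ = q (g₂⁻¹ * θ y₁ * g₂⁻¹⁻¹) := by simp [map_mul, map_inv, mul_assoc]
          _ = q (θ y₂) := hy₂
  exact main.1

private lemma decomp
    (hconj : ∀ (g : FreeGroup α) (y : FreeGroup β), ∃ y', q (g * θ y * g⁻¹) = q (θ y'))
    (hletter : ∀ a : α, ∃ (x : FreeGroup γ) (y : FreeGroup β),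
      q (FreeGroup.of a) = q (ψ x * θ y)) :
    ∀ w : FreeGroup α, ∃ (x : FreeGroup γ) (y : FreeGroup β), q w = q (ψ x * θ y) := by
  intro w
  induction w using FreeGroup.induction_on with
  | C1 => exact ⟨1, 1, by simp⟩
  | of a => exact hletter a
  | inv_of a ha =>
    obtain ⟨x, y, hxy⟩ := ha
    have hxy2 : q (FreeGroup.of a) = q (ψ x * θ y) := hxy
    obtain ⟨y', hy'⟩ := hconj (ψ x) y⁻¹
    refine ⟨x⁻¹, y', ?_⟩
    show q ((FreeGroup.of a)⁻¹) = q (ψ x⁻¹ * θ y')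
    simp only [map_mul, map_inv] at hxy2 hy' ⊢
    rw [hxy2, ← hy']
    group
  | mul w₁ w₂ h₁ h₂ =>
    obtain ⟨x₁, y₁, hxy₁⟩ := h₁
    obtain ⟨x₂, y₂, hxy₂⟩ := h₂
    obtain ⟨y₁', hy₁'⟩ := hconj (ψ x₂)⁻¹ y₁
    refine ⟨x₁ * x₂, y₁' * y₂, ?_⟩
    show q (w₁ * w₂) = q (ψ (x₁ * x₂) * θ (y₁' * y₂))
    simp only [map_mul, map_inv] at hxy₁ hxy₂ hy₁' ⊢
    rw [hxy₁, hxy₂, ← hy₁']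
    group

private lemma nc_map (R : Set (FreeGroup β)) (hR : ∀ r ∈ R, θ r ∈ K) :
    ∀ u ∈ Subgroup.normalClosure R, θ u ∈ K := by
  refine nc_ind ?_ ?_ ?_ ?_
  · intro g r hr
    simpa [map_mul, map_inv] using (inferInstance : K.Normal).conj_mem _ (hR r hr) (θ g)
  · simpa using K.one_mem
  · intro a b ha hb; simpa [map_mul] using K.mul_mem ha hb
  · intro a ha; simpa [map_inv] using K.inv_mem ha

private lemma nc_psi
    (hconj : ∀ (g : FreeGroup α) (y : FreeGroup β), ∃ y', q (g * θ y * g⁻¹) = q (θ y'))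
    (R : Set (FreeGroup γ)) (hR : ∀ r ∈ R, ∃ z, q (ψ r) = q (θ z)) :
    ∀ x ∈ Subgroup.normalClosure R, ∃ y, q (ψ x) = q (θ y) := by
  refine nc_ind ?_ ?_ ?_ ?_
  · intro g r hr
    obtain ⟨z, hz⟩ := hR r hr
    obtain ⟨z', hz'⟩ := hconj (ψ g) z
    refine ⟨z', ?_⟩
    calc q (ψ (g * r * g⁻¹)) = q (ψ g) * q (ψ r) * q (ψ g)⁻¹ := by
          simp [map_mul, map_inv]
      _ = q (ψ g) * q (θ z) * q (ψ g)⁻¹ := by rw [hz]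
      _ = q (ψ g * θ z * (ψ g)⁻¹) := by simp [map_mul, map_inv, mul_assoc]
      _ = q (θ z') := hz'
  · exact ⟨1, by simp⟩
  · rintro a b ⟨ya, hya⟩ ⟨yb, hyb⟩
    exact ⟨ya * yb, by simp [map_mul, hya, hyb]⟩
  · rintro a ⟨ya, hya⟩
    refine ⟨ya⁻¹, ?_⟩
    have : (q (ψ a))⁻¹ = (q (θ ya))⁻¹ := by rw [hya]
    simpa [map_inv] using this

end FG

private lemma mk_single {α : Type*} (a : α) (b : Bool) :
    FreeGroup.mk [(a, b)] = cond b (FreeGroup.of a) (FreeGroup.of a)⁻¹ := by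
  cases b
  · rw [show FreeGroup.of a = FreeGroup.mk [(a,true)] from rfl, FreeGroup.inv_mk]; rfl
  · rfl

private lemma lift_mk_mem_pow {H : Type*} [Group H] {A : Set H} :
    ∀ (n : ℕ) (w : List (A × Bool)), w.length ≤ n →
      FreeGroup.lift (fun a : A => (a : H)) (FreeGroup.mk w) ∈ (A ∪ A⁻¹ ∪ {1}) ^ n := by
  intro n
  induction n with
  | zero =>
    intro w hw
    rw [List.length_eq_zero_iff.1 (Nat.le_zero.1 hw)]
    rw [← FreeGroup.one_eq_mk, map_one, pow_zero]
    exact Set.mem_one.2 rfl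
  | succ k ih =>
    intro w hw
    match w with
    | [] =>
      rw [← FreeGroup.one_eq_mk, map_one]
      exact one_mem_W_pow (by simp) (k+1)
    | (a, b) :: w' =>
      rw [show ((a,b) :: w' : List (A × Bool)) = [(a,b)] ++ w' from rfl, ← FreeGroup.mul_mk,
        map_mul, pow_succ']
      refine Set.mul_mem_mul ?_ (ih w' (by simpa using hw))
      rw [mk_single]
      cases b
      · simp only [cond_false, map_inv, FreeGroup.lift_apply_of]
        exact Or.inl (Or.inr (by simp [Set.mem_inv]))
      · simp only [cond_true, FreeGroup.lift_apply_of]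
        exact Or.inl (Or.inl a.2)

private lemma q_eq_iff {H : Type*} [Group H] (K : Subgroup H) [K.Normal] (a b : H) :
    QuotientGroup.mk' K a = QuotientGroup.mk' K b ↔ a⁻¹ * b ∈ K :=
  QuotientGroup.eq

private lemma q_eq_of_mem {H : Type*} [Group H] (K : Subgroup H) [K.Normal] {X Y : H}
    (h : X * Y⁻¹ ∈ K) : QuotientGroup.mk' K X = QuotientGroup.mk' K Y := by
  rw [q_eq_iff]
  have h2 : (X * Y⁻¹)⁻¹ ∈ K := K.inv_mem h
  have h3 := (inferInstance : K.Normal).conj_mem _ h2 X⁻¹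
  simpa [mul_assoc] using h3

private lemma W_pow_compact {H : Type*} [Group H] [TopologicalSpace H] [IsTopologicalGroup H]
    {W : Set H} (hW : IsCompact W) : ∀ n : ℕ, IsCompact (W ^ n) := by
  intro n
  induction n with
  | zero => rw [pow_zero, ← Set.singleton_one]; exact isCompact_singleton
  | succ k ih => rw [pow_succ]; exact ih.mul hW

/-- A group `G` is *boundedly presented* by a subset `S ⊆ G` if there are an integer `n` and a
set `R` of words of length at most `n` in the letters `S ∪ S⁻¹`, each representing the identity
in `G`, such that the canonical homomorphism from the quotient of the free group on `S` by the
normal closure of `R` onto `G` is an isomorphism. -/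
def BoundedlyPresentedBy (G : Type*) [Group G] (S : Set G) : Prop :=
  ∃ (n : ℕ) (R : Set (FreeGroup S)),
    (∀ r ∈ R, ∃ w : List (S × Bool), FreeGroup.mk w = r ∧ w.length ≤ n) ∧
    Function.Surjective (FreeGroup.lift (fun s : S => (s : G))) ∧
    MonoidHom.ker (FreeGroup.lift (fun s : S => (s : G))) = Subgroup.normalClosure R

/-- A topological group is *compactly presented* if it is boundedly presented by some compact
subset. -/
def CompactlyPresented (G : Type*) [Group G] [TopologicalSpace G] : Prop :=
  ∃ S : Set G, IsCompact S ∧ BoundedlyPresentedBy G S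

/-- an extension of compactly presented locally compact groups is compactly
presented. -/
theorem compactlyPresented_of_extension {G : Type*} [Group G] [TopologicalSpace G]
    [IsTopologicalGroup G] [T2Space G] [LocallyCompactSpace G]
    (N : Subgroup G) [N.Normal] (hclosed : IsClosed (N : Set G))
    (hN : CompactlyPresented N) (hQ : CompactlyPresented (G ⧸ N)) :
    CompactlyPresented G := by
  classical
  obtain ⟨Tset, hTc, mN, RN, hRNlen, hTsurj, hTker⟩ := hN
  obtain ⟨Sbar, hSbarc, nQ, RQ, hRQlen, hQsurj, hQker⟩ := hQ
  haveI : IsClosed (N : Set G) := hclosed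
  haveI : LocallyCompactSpace N := hclosed.locallyCompactSpace
  set π : G →* G ⧸ N := QuotientGroup.mk' N with hπdef
  set liftT : FreeGroup Tset →* N := FreeGroup.lift (fun t : Tset => (t : N)) with hliftTdef
  set liftQ : FreeGroup Sbar →* G ⧸ N := FreeGroup.lift (fun b : Sbar => (b : G ⧸ N)) with
    hliftQdef
  -- generation facts
  have hTgen : Subgroup.closure Tset = (⊤ : Subgroup N) := by
    have h1 : liftT.range = ⊤ := MonoidHom.range_eq_top.2 hTsurj
    rw [hliftTdef, FreeGroup.range_lift_eq_closure, Subtype.range_coe] at h1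
    exact h1
  have hQgen : Subgroup.closure Sbar = (⊤ : Subgroup (G ⧸ N)) := by
    have h1 : liftQ.range = ⊤ := MonoidHom.range_eq_top.2 hQsurj
    rw [hliftQdef, FreeGroup.range_lift_eq_closure, Subtype.range_coe] at h1
    exact h1
  -- the compact set T' in G
  set T' : Set G := (fun n : N => (n : G)) '' Tset with hT'def
  have hT'c : IsCompact T' := hTc.image continuous_subtype_val
  have hT'N : T' ⊆ (N : Set G) := by rintro g ⟨t, _, rfl⟩; exact t.2
  -- a compact lift S of Sbar
  obtain ⟨S, hSc, hSsub, hSlift⟩ :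
      ∃ S : Set G, IsCompact S ∧ (∀ s ∈ S, π s ∈ Sbar) ∧ ∀ b ∈ Sbar, ∃ s ∈ S, π s = b := by
    choose sec hsec using fun b : G ⧸ N => QuotientGroup.mk'_surjective N b
    choose Kb hKbc hKbn using fun b : Sbar => exists_compact_mem_nhds (sec (b : G ⧸ N))
    have hopen : ∀ b : Sbar, IsOpen (π '' interior (Kb b)) := fun b =>
      QuotientGroup.isOpenMap_coe _ isOpen_interior
    have hcov : Sbar ⊆ ⋃ b : Sbar, π '' interior (Kb b) := by
      intro b hb
      exact Set.mem_iUnion.2 ⟨⟨b, hb⟩, sec b,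
        mem_interior_iff_mem_nhds.2 (hKbn ⟨b, hb⟩), hsec b⟩
    obtain ⟨t, ht⟩ := hSbarc.elim_finite_subcover _ hopen hcov
    have hS0c : IsCompact (⋃ b ∈ t, Kb b) :=
      t.finite_toSet.isCompact_biUnion fun b _ => hKbc b
    refine ⟨(⋃ b ∈ t, Kb b) ∩ π ⁻¹' Sbar, ?_, fun s hs => hs.2, ?_⟩
    · exact hS0c.inter_right (hSbarc.isClosed.preimage continuous_quotient_mk')
    · intro b hb
      obtain ⟨b₀, hb₀t, g, hg, hπg⟩ := Set.mem_iUnion₂.1 (ht hb)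
      exact ⟨g, ⟨Set.subset_biUnion_of_mem hb₀t (interior_subset hg), by simp [hπg, hb]⟩, hπg⟩
  -- the section of π over Sbar
  have hι0 : ∀ b : Sbar, ∃ s : G, s ∈ S ∧ π s = (b : G ⧸ N) := by
    intro b
    obtain ⟨s, hs, hp⟩ := hSlift b b.2
    exact ⟨s, hs, hp⟩
  choose ι hιS hιπ using hι0
  -- the compact generating set of G
  set Sig : Set G := S ∪ T' with hSigdef
  have hSigc : IsCompact Sig := hSc.union hT'c
  -- letter maps
  set fT : Tset → Sig := fun t => ⟨((t : N) : G), Or.inr ⟨(t : N), t.2, rfl⟩⟩ with hfTdef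
  set fS : Sbar → Sig := fun b => ⟨ι b, Or.inl (hιS b)⟩ with hfSdef
  set θ : FreeGroup Tset →* FreeGroup Sig := FreeGroup.map fT with hθdef
  set ψ : FreeGroup Sbar →* FreeGroup Sig := FreeGroup.map fS with hψdef
  set φ : FreeGroup Sig →* G := FreeGroup.lift (fun s : Sig => (s : G)) with hφdef
  -- commutation identities
  have hφθ : ∀ u : FreeGroup Tset, φ (θ u) = ((liftT u : N) : G) := by
    intro u
    have : φ.comp θ = N.subtype.comp liftT := by
      refine FreeGroup.ext_hom _ _ fun t => ?_
      simp [hθdef, hφdef, hliftTdef, FreeGroup.map.of, FreeGroup.lift_apply_of, hfTdef]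
    calc φ (θ u) = (φ.comp θ) u := rfl
      _ = (N.subtype.comp liftT) u := by rw [this]
      _ = ((liftT u : N) : G) := rfl
  have hφψ : ∀ x : FreeGroup Sbar, π (φ (ψ x)) = liftQ x := by
    intro x
    have : (π.comp φ).comp ψ = liftQ := by
      refine FreeGroup.ext_hom _ _ fun b => ?_
      simp [hψdef, hφdef, hliftQdef, FreeGroup.map.of, FreeGroup.lift_apply_of, hfSdef, hιπ]
    calc π (φ (ψ x)) = ((π.comp φ).comp ψ) x := rfl
      _ = liftQ x := by rw [this]
  have hφψof : ∀ b : Sbar, φ (ψ (FreeGroup.of b)) = ι b := by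
    intro b
    simp [hψdef, hφdef, FreeGroup.map.of, FreeGroup.lift_apply_of, hfSdef]
  -- N is contained in the closure of Sig and Sig generates G
  have hNle : N ≤ Subgroup.closure Sig := by
    have h1 : Subgroup.map N.subtype (Subgroup.closure Tset) = Subgroup.closure T' := by
      rw [MonoidHom.map_closure]
      rfl
    rw [hTgen, ← MonoidHom.range_eq_map, Subgroup.range_subtype] at h1
    rw [h1]
    exact Subgroup.closure_mono Set.subset_union_right
  have hSigtop : Subgroup.closure Sig = (⊤ : Subgroup G) := by
    rw [eq_top_iff]
    intro g _
    have h1 : π g ∈ Subgroup.map π (Subgroup.closure S) := by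
      have h2 : π g ∈ Subgroup.closure Sbar := by rw [hQgen]; trivial
      refine (Subgroup.closure_le _).2 ?_ h2
      intro b hb
      obtain ⟨s, hs, hπs⟩ := hSlift b hb
      exact ⟨s, Subgroup.subset_closure hs, hπs⟩
    obtain ⟨x, hx, hπx⟩ := h1
    have hgx : g * x⁻¹ ∈ N := by
      have : π (g * x⁻¹) = 1 := by rw [map_mul, map_inv, ← hπx, mul_inv_cancel]
      rwa [← QuotientGroup.ker_mk' N, MonoidHom.mem_ker]
    have : g = (g * x⁻¹) * x := by group
    rw [this]
    exact Subgroup.mul_mem _ (hNle hgx)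
      (Subgroup.closure_mono Set.subset_union_left hx)
  have hφsurj : Function.Surjective φ := by
    rw [← MonoidHom.range_eq_top, hφdef, FreeGroup.range_lift_eq_closure, Subtype.range_coe]
    exact hSigtop
  -- chooser of bounded T-words for compact subsets of N
  have chooser : ∀ C : Set G, IsCompact C → C ⊆ (N : Set G) →
      ∃ L : ℕ, ∀ g ∈ C, ∃ w : List (Tset × Bool), w.length ≤ L ∧
        ((liftT (FreeGroup.mk w) : N) : G) = g := by
    intro C hC hCN
    have hemb : Topology.IsClosedEmbedding (Subtype.val : N → G) :=
      Topology.IsClosedEmbedding.subtypeVal hclosed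
    have hC' : IsCompact ((Subtype.val : N → G) ⁻¹' C) := hemb.isCompact_preimage hC
    obtain ⟨L, hL⟩ := exists_bound hTc hTgen hC'
    refine ⟨L, fun g hg => ?_⟩
    obtain ⟨w, hw, hwv⟩ := hL ⟨g, hCN hg⟩ hg
    exact ⟨w, hw, by rw [hliftTdef, hwv]⟩
  -- the three compact sets
  obtain ⟨L1, ch1⟩ := chooser ((Sig ∪ Sig⁻¹) * T' * (Sig ∪ Sig⁻¹) ∩ (N : Set G))
    ((((hSigc.union hSigc.inv).mul hT'c).mul (hSigc.union hSigc.inv)).inter_right hclosed)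
    Set.inter_subset_right
  obtain ⟨L2, ch2⟩ := chooser ((Sig ∪ Sig⁻¹ ∪ {1}) ^ nQ ∩ (N : Set G))
    ((W_pow_compact ((hSigc.union hSigc.inv).union isCompact_singleton) nQ).inter_right hclosed)
    Set.inter_subset_right
  obtain ⟨L3, ch3⟩ := chooser (S⁻¹ * S ∩ (N : Set G))
    ((hSc.inv.mul hSc).inter_right hclosed) Set.inter_subset_right
  -- the relator set
  set R1 : Set (FreeGroup Sig) := θ '' RN with hR1def
  set R2 : Set (FreeGroup Sig) := { ρ | ∃ (a : Sig) (tt : Tset) (ε : Bool)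
      (y : List (Tset × Bool)), y.length ≤ L1 ∧
      ((liftT (FreeGroup.mk y) : N) : G) =
        (cond ε (a : G) (a : G)⁻¹) * ((tt : N) : G) * (cond ε (a : G) (a : G)⁻¹)⁻¹ ∧
      ρ = (cond ε (FreeGroup.of a) (FreeGroup.of a)⁻¹) * θ (FreeGroup.of tt) *
        (cond ε (FreeGroup.of a) (FreeGroup.of a)⁻¹)⁻¹ * (θ (FreeGroup.mk y))⁻¹ } with hR2def
  set R3 : Set (FreeGroup Sig) := { ρ | ∃ (r : FreeGroup Sbar) (_ : r ∈ RQ)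
      (y : List (Tset × Bool)), y.length ≤ L2 ∧
      ((liftT (FreeGroup.mk y) : N) : G) = φ (ψ r) ∧
      ρ = ψ r * (θ (FreeGroup.mk y))⁻¹ } with hR3def
  set R4 : Set (FreeGroup Sig) := { ρ | ∃ (a : Sig) (hb : π (a : G) ∈ Sbar)
      (y : List (Tset × Bool)), y.length ≤ L3 ∧
      ((liftT (FreeGroup.mk y) : N) : G) = (ι ⟨π (a : G), hb⟩)⁻¹ * (a : G) ∧
      ρ = (FreeGroup.of a)⁻¹ * ψ (FreeGroup.of ⟨π (a : G), hb⟩) * θ (FreeGroup.mk y) } with hR4def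
  set R : Set (FreeGroup Sig) := R1 ∪ R2 ∪ R3 ∪ R4 with hRdef
  set K : Subgroup (FreeGroup Sig) := Subgroup.normalClosure R with hKdef
  haveI hKn : K.Normal := Subgroup.normalClosure_normal
  -- every relator maps to 1 under φ
  have hRker : ∀ ρ ∈ R, φ ρ = 1 := by
    rintro ρ (((⟨r, hr, rfl⟩ | ⟨a, tt, ε, y, _, hy, rfl⟩) | ⟨r, hr, y, _, hy, rfl⟩) |
      ⟨a, hb, y, _, hy, rfl⟩)
    · have : liftT r = 1 := by
        have : r ∈ liftT.ker := by rw [hTker]; exact Subgroup.subset_normalClosure hr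
        exact this
      rw [hφθ, this]
      rfl
    · have hcond : φ (cond ε (FreeGroup.of a) (FreeGroup.of a)⁻¹) =
          cond ε (a : G) (a : G)⁻¹ := by
        cases ε <;> simp [hφdef, FreeGroup.lift_apply_of]
      rw [map_mul, map_mul, map_mul, map_inv, map_inv, hcond, hφθ, hφθ, hy]
      have : φ (θ (FreeGroup.of tt)) = ((tt : N) : G) := by
        rw [hφθ]
        simp [hliftTdef, FreeGroup.lift_apply_of]
      rw [hφθ] at this
      rw [this]
      group
    · rw [map_mul, map_inv, hφθ, hy]
      group
    · rw [map_mul, map_mul, map_inv, hφθ, hy, hφψof]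
      simp [hφdef, FreeGroup.lift_apply_of]
  have hKker : K ≤ φ.ker := Subgroup.normalClosure_le_normal fun ρ hρ => hRker ρ hρ
  have hq1 : ∀ ρ ∈ R, QuotientGroup.mk' K ρ = 1 := fun ρ hρ =>
    (QuotientGroup.eq_one_iff ρ).2 (Subgroup.subset_normalClosure hρ)
  -- conjugation of θ-words
  have hconj : ∀ (g : FreeGroup Sig) (y : FreeGroup Tset), ∃ y',
      QuotientGroup.mk' K (g * θ y * g⁻¹) = QuotientGroup.mk' K (θ y') := by
    refine conj_into θ K fun a tt => ?_
    have key : ∀ ε : Bool, ∃ y' : FreeGroup Tset,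
        QuotientGroup.mk' K ((cond ε (FreeGroup.of a) (FreeGroup.of a)⁻¹) *
          θ (FreeGroup.of tt) * (cond ε (FreeGroup.of a) (FreeGroup.of a)⁻¹)⁻¹) =
        QuotientGroup.mk' K (θ y') := by
      intro ε
      have hmem : (cond ε (a : G) (a : G)⁻¹) * ((tt : N) : G) * (cond ε (a : G) (a : G)⁻¹)⁻¹ ∈
          (Sig ∪ Sig⁻¹) * T' * (Sig ∪ Sig⁻¹) ∩ (N : Set G) := by
        constructor
        · refine Set.mul_mem_mul (Set.mul_mem_mul ?_ ⟨(tt : N), tt.2, rfl⟩) ?_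
          · cases ε
            · exact Or.inr (Set.inv_mem_inv.2 a.2)
            · exact Or.inl a.2
          · cases ε
            · simpa using Or.inl a.2
            · exact Or.inr (Set.inv_mem_inv.2 a.2)
        · exact (inferInstance : N.Normal).conj_mem _ (tt : N).2 _
      obtain ⟨y, hylen, hyv⟩ := ch1 _ hmem
      refine ⟨FreeGroup.mk y, ?_⟩
      refine q_eq_of_mem K ?_
      exact Subgroup.subset_normalClosure (Or.inl (Or.inl (Or.inr
        ⟨a, tt, ε, y, hylen, hyv, rfl⟩)))
    constructor
    · simpa using key true
    · have := key false
      simpa using this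
  -- decomposition of letters
  have hletterD : ∀ a : Sig, ∃ (x : FreeGroup Sbar) (y : FreeGroup Tset),
      QuotientGroup.mk' K (FreeGroup.of a) = QuotientGroup.mk' K (ψ x * θ y) := by
    intro a
    rcases a.2 with hS | hT'
    · -- a comes from S
      have hb : π (a : G) ∈ Sbar := hSsub _ hS
      have hmem : (ι ⟨π (a : G), hb⟩)⁻¹ * (a : G) ∈ S⁻¹ * S ∩ (N : Set G) := by
        constructor
        · exact Set.mul_mem_mul (Set.inv_mem_inv.2 (hιS ⟨π (a : G), hb⟩)) hS
        · have : π ((ι ⟨π (a : G), hb⟩)⁻¹ * (a : G)) = 1 := by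
            rw [map_mul, map_inv, hιπ ⟨π (a : G), hb⟩]
            simp
          exact (QuotientGroup.eq_one_iff _).1 this
      obtain ⟨y, hylen, hyv⟩ := ch3 _ hmem
      refine ⟨FreeGroup.of ⟨π (a : G), hb⟩, FreeGroup.mk y, ?_⟩
      have hρ : (FreeGroup.of a)⁻¹ * ψ (FreeGroup.of ⟨π (a : G), hb⟩) * θ (FreeGroup.mk y) ∈ K :=
        Subgroup.subset_normalClosure (Or.inr ⟨a, hb, y, hylen, hyv, rfl⟩)
      rw [q_eq_iff]
      simpa [mul_assoc] using hρ
    · -- a comes from T'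
      obtain ⟨tn, htn, hval⟩ := hT'
      refine ⟨1, FreeGroup.of ⟨tn, htn⟩, ?_⟩
      have : θ (FreeGroup.of (⟨tn, htn⟩ : Tset)) = FreeGroup.of a := by
        rw [hθdef, FreeGroup.map.of]
        congr 1
        exact Subtype.ext hval
      rw [map_one, one_mul, this]
  -- relators of the quotient are θ-words mod K
  have hψR : ∀ r ∈ RQ, ∃ z, QuotientGroup.mk' K (ψ r) =
      QuotientGroup.mk' K (θ z) := by
    intro r hr
    obtain ⟨w, hwmk, hwlen⟩ := hRQlen r hr
    have hmem : φ (ψ r) ∈ (Sig ∪ Sig⁻¹ ∪ {1}) ^ nQ ∩ (N : Set G) := by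
      constructor
      · have : ψ r = FreeGroup.mk (w.map fun p => (fS p.1, p.2)) := by
          rw [← hwmk, hψdef, FreeGroup.map.mk]
        rw [this, hφdef]
        exact lift_mk_mem_pow nQ _ (by simpa using hwlen)
      · have h1 : liftQ r = 1 := by
          have : r ∈ liftQ.ker := by rw [hQker]; exact Subgroup.subset_normalClosure hr
          exact this
        have : π (φ (ψ r)) = 1 := by rw [hφψ, h1]
        exact (QuotientGroup.eq_one_iff _).1 this
    obtain ⟨y, hylen, hyv⟩ := ch2 _ hmem
    refine ⟨FreeGroup.mk y, ?_⟩
    refine q_eq_of_mem K ?_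
    exact Subgroup.subset_normalClosure (Or.inl (Or.inr ⟨r, hr, y, hylen, hyv, rfl⟩))
  -- kernel computation
  have hker : φ.ker = K := by
    refine le_antisymm ?_ hKker
    intro w hw
    have hw1 : φ w = 1 := hw
    obtain ⟨x, y, hxy⟩ := decomp θ ψ K hconj hletterD w
    have hwK : w⁻¹ * (ψ x * θ y) ∈ K := (q_eq_iff K _ _).1 hxy
    have hφxy : φ (ψ x * θ y) = 1 := by
      have h1 : φ (w⁻¹ * (ψ x * θ y)) = 1 := hKker hwK
      rw [map_mul, map_inv, hw1] at h1
      simpa using h1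
    have hliftQx : liftQ x = 1 := by
      rw [← hφψ]
      have h2 : φ (ψ x) = ((liftT y : N) : G)⁻¹ := by
        rw [map_mul, hφθ] at hφxy
        exact eq_inv_of_mul_eq_one_left hφxy
      rw [h2, map_inv]
      have : π ((liftT y : N) : G) = 1 := (QuotientGroup.eq_one_iff _).2 (liftT y).2
      rw [this]
      simp
    have hxNC : x ∈ Subgroup.normalClosure RQ := by
      rw [← hQker]
      exact hliftQx
    obtain ⟨y₀, hy₀⟩ := nc_psi θ ψ K hconj RQ hψR x hxNC
    have hqw : QuotientGroup.mk' K w = QuotientGroup.mk' K (θ (y₀ * y)) := by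
      rw [hxy, map_mul, hy₀, ← map_mul, ← map_mul]
    have hwK2 : w⁻¹ * θ (y₀ * y) ∈ K := (q_eq_iff K _ _).1 hqw
    have hθy : φ (θ (y₀ * y)) = 1 := by
      have h1 : φ (w⁻¹ * θ (y₀ * y)) = 1 := hKker hwK2
      rw [map_mul, map_inv, hw1] at h1
      simpa using h1
    have hliftTy : liftT (y₀ * y) = 1 := by
      rw [hφθ] at hθy
      exact OneMemClass.coe_eq_one.1 hθy
    have hyNC : y₀ * y ∈ Subgroup.normalClosure RN := by
      rw [← hTker]
      exact hliftTy
    have hθK : θ (y₀ * y) ∈ K := by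
      refine nc_map θ K RN (fun r hr => ?_) _ hyNC
      exact Subgroup.subset_normalClosure (Or.inl (Or.inl (Or.inl ⟨r, hr, rfl⟩)))
    have : w⁻¹ ∈ K := by
      have := K.mul_mem hwK2 (K.inv_mem hθK)
      simpa [mul_assoc] using this
    simpa using K.inv_mem this
  -- word length bounds
  set n : ℕ := max (max mN (3 + L1)) (max (nQ + L2) (2 + L3)) with hn
  have hwords : ∀ ρ ∈ R, ∃ w : List (Sig × Bool), FreeGroup.mk w = ρ ∧ w.length ≤ n := by
    rintro ρ (((⟨r, hr, rfl⟩ | ⟨a, tt, ε, y, hylen, _, rfl⟩) | ⟨r, hr, y, hylen, _, rfl⟩) |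
      ⟨a, hb, y, hylen, _, rfl⟩)
    · obtain ⟨w, hwmk, hwlen⟩ := hRNlen r hr
      refine ⟨w.map fun p => (fT p.1, p.2), ?_, ?_⟩
      · rw [← hwmk, hθdef, FreeGroup.map.mk]
      · simp only [List.length_map]
        exact le_trans hwlen (le_trans (le_max_left _ _) (le_max_left _ _))
    · refine ⟨[(a, ε), (fT tt, true), (a, !ε)] ++
        FreeGroup.invRev (y.map fun p => (fT p.1, p.2)), ?_, ?_⟩
      · rw [show [(a, ε), (fT tt, true), (a, !ε)] ++
            FreeGroup.invRev (y.map fun p => (fT p.1, p.2)) =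
            [(a, ε)] ++ ([(fT tt, true)] ++ ([(a, !ε)] ++
              FreeGroup.invRev (y.map fun p => (fT p.1, p.2)))) from rfl]
        rw [← FreeGroup.mul_mk, ← FreeGroup.mul_mk, ← FreeGroup.mul_mk]
        rw [mk_single, mk_single, mk_single]
        simp only [cond_true]
        have h1 : FreeGroup.mk (FreeGroup.invRev (y.map fun p => (fT p.1, p.2))) =
            (θ (FreeGroup.mk y))⁻¹ := by
          rw [hθdef, FreeGroup.map.mk, FreeGroup.inv_mk]
        have h2 : (cond (!ε) (FreeGroup.of a) (FreeGroup.of a)⁻¹) =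
            (cond ε (FreeGroup.of a) (FreeGroup.of a)⁻¹)⁻¹ := by
          cases ε <;> simp
        have h3 : FreeGroup.of (fT tt) = θ (FreeGroup.of tt) := by
          rw [hθdef, FreeGroup.map.of]
        rw [h1, h2, h3]
        simp [mul_assoc]
      · simp only [List.length_append, List.length_cons, List.length_nil,
          FreeGroup.invRev_length, List.length_map]
        have : 3 + y.length ≤ 3 + L1 := by omega
        refine le_trans (by omega) (le_trans this (le_trans (le_max_right _ _)
          (le_max_left _ _)))
    · obtain ⟨w, hwmk, hwlen⟩ := hRQlen r hr
      refine ⟨(w.map fun p => (fS p.1, p.2)) ++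
        FreeGroup.invRev (y.map fun p => (fT p.1, p.2)), ?_, ?_⟩
      · rw [← FreeGroup.mul_mk]
        have h1 : FreeGroup.mk (w.map fun p => (fS p.1, p.2)) = ψ r := by
          rw [← hwmk, hψdef, FreeGroup.map.mk]
        have h2 : FreeGroup.mk (FreeGroup.invRev (y.map fun p => (fT p.1, p.2))) =
            (θ (FreeGroup.mk y))⁻¹ := by
          rw [hθdef, FreeGroup.map.mk, FreeGroup.inv_mk]
        rw [h1, h2]
      · simp only [List.length_append, List.length_map, FreeGroup.invRev_length]
        have : w.length + y.length ≤ nQ + L2 := by omega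
        exact le_trans this (le_trans (le_max_left _ _) (le_max_right _ _))
    · refine ⟨[(a, false), (fS ⟨π (a : G), hb⟩, true)] ++ (y.map fun p => (fT p.1, p.2)),
        ?_, ?_⟩
      · rw [show [(a, false), (fS ⟨π (a : G), hb⟩, true)] ++ (y.map fun p => (fT p.1, p.2)) =
            [(a, false)] ++ ([(fS ⟨π (a : G), hb⟩, true)] ++ (y.map fun p => (fT p.1, p.2)))
            from rfl]
        rw [← FreeGroup.mul_mk, ← FreeGroup.mul_mk]
        rw [mk_single, mk_single]
        simp only [cond_true, cond_false]
        have h1 : FreeGroup.mk (y.map fun p => (fT p.1, p.2)) = θ (FreeGroup.mk y) := by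
          rw [hθdef, FreeGroup.map.mk]
        have h2 : FreeGroup.of (fS ⟨π (a : G), hb⟩) = ψ (FreeGroup.of ⟨π (a : G), hb⟩) := by
          rw [hψdef, FreeGroup.map.of]
        rw [h1, h2]
        simp [mul_assoc]
      · simp only [List.length_append, List.length_cons, List.length_nil, List.length_map]
        have : 2 + y.length ≤ 2 + L3 := by omega
        refine le_trans (by omega) (le_trans this (le_trans (le_max_right _ _)
          (le_max_right _ _)))
  exact ⟨Sig, hSigc, n, R, hwords, hφsurj, hker⟩
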